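/- Let Ψ₀ ∈ ℝ. Both the constant function Ψ₁(t, r̄) = Ψ₀ and the function Ψ₂(t, r̄) = Ψ₀·√(t/(4t² + r̄²)) satisfy, at every point with t > 0, the partial differential equation ∂/∂r̄ [Ψ(t, r̄)·(1 − r̄²/(4t²))] = ∂/∂t [Ψ(t, r̄)·(r̄/(2t))]. -/

import Mathlib

/-- Both the constant integrating factor `Ψ₁(t,r̄) = Ψ₀` and the dynamical one
`Ψ₂(t,r̄) = Ψ₀√(t/(4t² + r̄²))` solve the integrating factor PDE
`∂_r̄ [Ψ(1 − r̄²/(4t²))] = ∂_t [Ψ·(r̄/(2t))]` at every point with `t > 0`. -/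
theorem integrating_factor_solutions (Ψ₀ : ℝ) :
    (∀ t r : ℝ, 0 < t →
      deriv (fun r' : ℝ => Ψ₀ * (1 - r' ^ 2 / (4 * t ^ 2))) r =
        deriv (fun t' : ℝ => Ψ₀ * (r / (2 * t'))) t) ∧
    (∀ t r : ℝ, 0 < t →
      deriv (fun r' : ℝ =>
          (Ψ₀ * Real.sqrt (t / (4 * t ^ 2 + r' ^ 2))) * (1 - r' ^ 2 / (4 * t ^ 2))) r =
        deriv (fun t' : ℝ =>
          (Ψ₀ * Real.sqrt (t' / (4 * t' ^ 2 + r ^ 2))) * (r / (2 * t'))) t) := by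
  constructor
  · intro t r ht
    have ht2 : (4 : ℝ) * t ^ 2 ≠ 0 := by positivity
    have h2t : (2 : ℝ) * t ≠ 0 := by positivity
    have h1 : HasDerivAt (fun r' : ℝ => Ψ₀ * (1 - r' ^ 2 / (4 * t ^ 2)))
        (Ψ₀ * (0 - (2 * r ^ 1) / (4 * t ^ 2))) r := by
      have := (((hasDerivAt_pow 2 r).div_const (4 * t ^ 2)).const_sub 1).const_mul Ψ₀
      refine this.congr_deriv ?_; push_cast; ring
    have h2 : HasDerivAt (fun t' : ℝ => Ψ₀ * (r / (2 * t')))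
        (Ψ₀ * ((0 * (2 * t) - r * 2) / (2 * t) ^ 2)) t := by
      have := (((hasDerivAt_const t r).div ((hasDerivAt_id t).const_mul 2) h2t)).const_mul Ψ₀
      simp only [id] at this
      refine this.congr_deriv ?_; push_cast; ring
    rw [h1.deriv, h2.deriv]
    field_simp
    ring
  · intro t r ht
    set s : ℝ := 4 * t ^ 2 + r ^ 2 with hs_def
    have hs : 0 < s := by positivity
    have hg : 0 < t / s := by positivity
    set u : ℝ := Real.sqrt (t / s) with hu_def
    have hu : 0 < u := Real.sqrt_pos.mpr hg
    have hu2 : u ^ 2 = t / s := Real.sq_sqrt hg.le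
    have ht2 : (4 : ℝ) * t ^ 2 ≠ 0 := by positivity
    have h2t : (2 : ℝ) * t ≠ 0 := by positivity
    -- LHS
    have hgr : HasDerivAt (fun r' : ℝ => t / (4 * t ^ 2 + r' ^ 2))
        ((0 * s - t * (2 * r ^ 1)) / s ^ 2) r := by
      have := (hasDerivAt_const r t).div ((hasDerivAt_pow 2 r).const_add (4 * t ^ 2)) hs.ne'
      refine this.congr_deriv ?_; push_cast; ring
    have hsq : HasDerivAt (fun r' : ℝ => Real.sqrt (t / (4 * t ^ 2 + r' ^ 2)))
        ((0 * s - t * (2 * r ^ 1)) / s ^ 2 / (2 * u)) r := hgr.sqrt hg.ne'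
    have hpoly : HasDerivAt (fun r' : ℝ => 1 - r' ^ 2 / (4 * t ^ 2))
        (0 - (2 * r ^ 1) / (4 * t ^ 2)) r := by
      have := ((hasDerivAt_pow 2 r).div_const (4 * t ^ 2)).const_sub 1
      refine this.congr_deriv ?_; push_cast; ring
    have hL : HasDerivAt (fun r' : ℝ =>
        (Ψ₀ * Real.sqrt (t / (4 * t ^ 2 + r' ^ 2))) * (1 - r' ^ 2 / (4 * t ^ 2)))
        ((Ψ₀ * ((0 * s - t * (2 * r ^ 1)) / s ^ 2 / (2 * u))) * (1 - r ^ 2 / (4 * t ^ 2))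
          + (Ψ₀ * u) * (0 - (2 * r ^ 1) / (4 * t ^ 2))) r :=
      (hsq.const_mul Ψ₀).mul hpoly
    -- RHS
    have hgt : HasDerivAt (fun t' : ℝ => t' / (4 * t' ^ 2 + r ^ 2))
        ((1 * s - t * (4 * (2 * t ^ 1))) / s ^ 2) t := by
      have := (hasDerivAt_id t).div (((hasDerivAt_pow 2 t).const_mul 4).add_const (r ^ 2)) hs.ne'
      simp only [id] at this
      refine this.congr_deriv ?_; push_cast; ring
    have hsqt : HasDerivAt (fun t' : ℝ => Real.sqrt (t' / (4 * t' ^ 2 + r ^ 2)))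
        ((1 * s - t * (4 * (2 * t ^ 1))) / s ^ 2 / (2 * u)) t := hgt.sqrt hg.ne'
    have hfrac : HasDerivAt (fun t' : ℝ => r / (2 * t'))
        ((0 * (2 * t) - r * 2) / (2 * t) ^ 2) t := by
      have := (hasDerivAt_const t r).div ((hasDerivAt_id t).const_mul 2) h2t
      simp only [id] at this
      refine this.congr_deriv ?_; push_cast; ring
    have hR : HasDerivAt (fun t' : ℝ =>
        (Ψ₀ * Real.sqrt (t' / (4 * t' ^ 2 + r ^ 2))) * (r / (2 * t')))
        ((Ψ₀ * ((1 * s - t * (4 * (2 * t ^ 1))) / s ^ 2 / (2 * u))) * (r / (2 * t))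
          + (Ψ₀ * u) * ((0 * (2 * t) - r * 2) / (2 * t) ^ 2)) t :=
      (hsqt.const_mul Ψ₀).mul hfrac
    rw [hL.deriv, hR.deriv]
    have hu2' : u ^ 2 * s = t := by rw [hu2]; field_simp
    have key : ∀ X : ℝ, X / (2 * u) = X * (u * s) / (2 * t) := by
      intro X
      rw [div_eq_div_iff (by positivity) (by positivity)]
      linear_combination -2 * X * hu2'
    rw [key, key]
    field_simp
    ring
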